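/- Let A be a k-algebra and s: k[t]/⟨t²⟩ ⊗ A → A ⊗ k[t]/⟨t²⟩ a twisting map, with ι_0, ι_1: A → A defined by s(t ⊗ a) = ι_0(a) ⊗ 1 + ι_1(a) ⊗ t. Then: (1) ι_1 is an algebra endomorphism; (2) ι_0(ab) = ι_0(a)·b + ι_1(a)·ι_0(b); (3) ι_0² = 0 and ι_0∘ι_1 = −ι_1∘ι_0. Conversely, any pair (ι_0, ι_1) satisfying (1)–(3) defines a twisting map by this formula. -/
import Mathlib


open TensorProduct

/-- A twisting map `s : B ⊗ A → A ⊗ B`: it is compatible with the units and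
with the multiplications of `A` and `B` (stated on pure tensors, which
suffices by linearity). -/
structure IsTwistingMap (k A B : Type*) [CommRing k] [Ring A] [Ring B]
    [Algebra k A] [Algebra k B] (s : B ⊗[k] A →ₗ[k] A ⊗[k] B) : Prop where
  unit_left : ∀ a : A, s (1 ⊗ₜ a) = a ⊗ₜ 1
  unit_right : ∀ b : B, s (b ⊗ₜ 1) = 1 ⊗ₜ b
  mul_compat_B : ∀ (b b' : B) (a : A),
    s ((b * b') ⊗ₜ a) =
      (LinearMap.lTensor A (LinearMap.mul' k B))
        ((TensorProduct.assoc k A B B)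
          ((LinearMap.rTensor B s)
            ((TensorProduct.assoc k B A B).symm
              ((LinearMap.lTensor B s)
                ((TensorProduct.assoc k B B A) ((b ⊗ₜ b') ⊗ₜ a))))))
  mul_compat_A : ∀ (b : B) (a a' : A),
    s (b ⊗ₜ (a * a')) =
      (LinearMap.rTensor B (LinearMap.mul' k A))
        ((TensorProduct.assoc k A A B).symm
          ((LinearMap.lTensor A s)
            ((TensorProduct.assoc k A B A)
              ((LinearMap.rTensor A s)
                ((TensorProduct.assoc k B A A).symm (b ⊗ₜ (a ⊗ₜ a')))))))


set_option maxHeartbeats 1000000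
set_option synthInstance.maxHeartbeats 400000

section Aux
open DualNumber
variable (k A : Type*) [CommRing k] [Ring A] [Algebra k A]

noncomputable def myPi0 : A ⊗[k] DualNumber k →ₗ[k] A :=
  (TensorProduct.rid k A).toLinearMap ∘ₗ
    LinearMap.lTensor A ((TrivSqZeroExt.fstHom k k k).toLinearMap)

noncomputable def myPi1 : A ⊗[k] DualNumber k →ₗ[k] A :=
  (TensorProduct.rid k A).toLinearMap ∘ₗ
    LinearMap.lTensor A (TrivSqZeroExt.sndHom k k)

@[simp] lemma myPi0_tmul (a : A) (x : DualNumber k) : myPi0 k A (a ⊗ₜ x) = x.fst • a := by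
  simp [myPi0]

@[simp] lemma myPi1_tmul (a : A) (x : DualNumber k) : myPi1 k A (a ⊗ₜ x) = x.snd • a := by
  simp [myPi1]

lemma tensor_pair_eq {x y x' y' : A}
    (h : x ⊗ₜ[k] (1 : DualNumber k) + y ⊗ₜ[k] (ε : DualNumber k)
       = x' ⊗ₜ[k] (1 : DualNumber k) + y' ⊗ₜ[k] (ε : DualNumber k)) : x = x' ∧ y = y' := by
  constructor
  · have := congrArg (myPi0 k A) h
    simpa using this
  · have := congrArg (myPi1 k A) h
    simpa using this
end Aux

section Aux2
open DualNumber
variable (k A : Type*) [CommRing k] [Ring A] [Algebra k A]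

noncomputable def twistMap (ι₀ ι₁ : A →ₗ[k] A) : DualNumber k ⊗[k] A →ₗ[k] A ⊗[k] DualNumber k :=
  ((TensorProduct.mk k A (DualNumber k)).flip 1) ∘ₗ
    ((TensorProduct.lid k A).toLinearMap ∘ₗ
      LinearMap.rTensor A (TrivSqZeroExt.fstHom k k k).toLinearMap) +
  ((TensorProduct.mk k A (DualNumber k)).flip 1) ∘ₗ ι₀ ∘ₗ
    ((TensorProduct.lid k A).toLinearMap ∘ₗ LinearMap.rTensor A (TrivSqZeroExt.sndHom k k)) +
  ((TensorProduct.mk k A (DualNumber k)).flip ε) ∘ₗ ι₁ ∘ₗ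
    ((TensorProduct.lid k A).toLinearMap ∘ₗ LinearMap.rTensor A (TrivSqZeroExt.sndHom k k))

@[simp] lemma twistMap_tmul (ι₀ ι₁ : A →ₗ[k] A) (x : DualNumber k) (a : A) :
    twistMap k A ι₀ ι₁ (x ⊗ₜ a)
      = (x.fst • a + x.snd • ι₀ a) ⊗ₜ (1 : DualNumber k)
        + (x.snd • ι₁ a) ⊗ₜ (ε : DualNumber k) := by
  simp [twistMap, add_tmul, map_smul, smul_tmul']
end Aux2

open DualNumber in
theorem stmt14 (k A : Type*) [CommRing k] [Ring A] [Algebra k A] :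
    (∀ (s : DualNumber k ⊗[k] A →ₗ[k] A ⊗[k] DualNumber k) (ι₀ ι₁ : A →ₗ[k] A),
      IsTwistingMap k A (DualNumber k) s →
      (∀ a : A, s ((ε : DualNumber k) ⊗ₜ a) =
        ι₀ a ⊗ₜ (1 : DualNumber k) + ι₁ a ⊗ₜ (ε : DualNumber k)) →
      (ι₁ 1 = 1 ∧ (∀ a b : A, ι₁ (a * b) = ι₁ a * ι₁ b) ∧
        (∀ a b : A, ι₀ (a * b) = ι₀ a * b + ι₁ a * ι₀ b) ∧
        (∀ a : A, ι₀ (ι₀ a) = 0) ∧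
        (∀ a : A, ι₀ (ι₁ a) = - ι₁ (ι₀ a)))) ∧
    (∀ ι₀ ι₁ : A →ₗ[k] A,
      ι₁ 1 = 1 → (∀ a b : A, ι₁ (a * b) = ι₁ a * ι₁ b) →
      (∀ a b : A, ι₀ (a * b) = ι₀ a * b + ι₁ a * ι₀ b) →
      (∀ a : A, ι₀ (ι₀ a) = 0) →
      (∀ a : A, ι₀ (ι₁ a) = - ι₁ (ι₀ a)) →
      ∃ s : DualNumber k ⊗[k] A →ₗ[k] A ⊗[k] DualNumber k,
        IsTwistingMap k A (DualNumber k) s ∧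
        ∀ a : A, s ((ε : DualNumber k) ⊗ₜ a) =
          ι₀ a ⊗ₜ (1 : DualNumber k) + ι₁ a ⊗ₜ (ε : DualNumber k)) := by
  
  constructor
  · intro s ι₀ ι₁ ht hs

    -- unit
    have hu : ι₀ (1:A) = 0 ∧ ι₁ (1:A) = 1 := by
      have h := (hs 1).symm.trans (ht.unit_right ε)
      have h' : ι₀ (1:A) ⊗ₜ[k] (1 : DualNumber k) + ι₁ (1:A) ⊗ₜ[k] (ε : DualNumber k)
          = (0:A) ⊗ₜ[k] (1 : DualNumber k) + (1:A) ⊗ₜ[k] (ε : DualNumber k) := by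
        rw [h]; simp
      exact tensor_pair_eq k A h'
    -- multiplication in A
    have hmulA : ∀ a a' : A, ι₀ (a * a') = ι₀ a * a' + ι₁ a * ι₀ a' ∧
        ι₁ (a * a') = ι₁ a * ι₁ a' := by
      intro a a'
      have h := ht.mul_compat_A ε a a'
      rw [hs (a * a')] at h
      simp only [assoc_symm_tmul, LinearMap.rTensor_tmul, hs, add_tmul, map_add, assoc_tmul,
        LinearMap.lTensor_tmul, ht.unit_left, LinearMap.mul'_apply, tmul_add] at h
      have h' : ι₀ (a*a') ⊗ₜ[k] (1 : DualNumber k) + ι₁ (a*a') ⊗ₜ[k] (ε : DualNumber k)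
          = (ι₀ a * a' + ι₁ a * ι₀ a') ⊗ₜ[k] (1 : DualNumber k)
            + (ι₁ a * ι₁ a') ⊗ₜ[k] (ε : DualNumber k) := by
        rw [h]; simp [add_tmul]; abel
      exact tensor_pair_eq k A h'
    -- multiplication in B
    have hmulB : ∀ a : A, ι₀ (ι₀ a) = 0 ∧ ι₀ (ι₁ a) = - ι₁ (ι₀ a) := by
      intro a
      have h := ht.mul_compat_B ε ε a
      simp only [eps_mul_eps, zero_tmul, map_zero, assoc_tmul, LinearMap.lTensor_tmul, hs,
        tmul_add, add_tmul, map_add, assoc_symm_tmul, LinearMap.rTensor_tmul,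
        LinearMap.mul'_apply, one_mul, mul_one, tmul_zero] at h
      have h' : (0:A) ⊗ₜ[k] (1 : DualNumber k) + (0:A) ⊗ₜ[k] (ε : DualNumber k)
          = ι₀ (ι₀ a) ⊗ₜ[k] (1 : DualNumber k)
            + (ι₁ (ι₀ a) + ι₀ (ι₁ a)) ⊗ₜ[k] (ε : DualNumber k) := by
        have h0 : (0 : A ⊗[k] DualNumber k) = ι₀ (ι₀ a) ⊗ₜ[k] (1 : DualNumber k)
            + (ι₁ (ι₀ a) + ι₀ (ι₁ a)) ⊗ₜ[k] (ε : DualNumber k) := by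
          rw [h, add_tmul]; abel
        simpa using h0
      obtain ⟨h0, h1⟩ := tensor_pair_eq k A h'
      exact ⟨h0.symm, by linear_combination (norm := abel) -h1⟩
    exact ⟨hu.2, fun a b => (hmulA a b).2, fun a b => (hmulA a b).1,
      fun a => (hmulB a).1, fun a => (hmulB a).2⟩
  · intro ι₀ ι₁ h1 hm1 hm0 hsq hac

    have h0 : ι₀ (1:A) = 0 := by
      have := hm0 1 1
      simp [h1] at this
      exact this
    refine ⟨twistMap k A ι₀ ι₁, ⟨?_, ?_, ?_, ?_⟩, ?_⟩
    · intro a; simp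
    · intro b
      simp only [twistMap_tmul, h0, h1, smul_zero, add_zero]
      rw [smul_tmul, smul_tmul, ← tmul_add]
      congr 1
      ext <;> simp
    · intro b b' a
      simp only [twistMap_tmul, assoc_tmul, LinearMap.lTensor_tmul, tmul_add, map_add,
        assoc_symm_tmul, LinearMap.rTensor_tmul, LinearMap.mul'_apply, one_mul, mul_one,
        eps_mul_eps, tmul_zero, add_zero, map_smul, smul_add, add_tmul, hsq, smul_zero,
        zero_tmul, zero_add, hac, TrivSqZeroExt.fst_mul, TrivSqZeroExt.snd_mul,
        op_smul_eq_smul, smul_eq_mul, smul_smul, smul_neg, tmul_neg, add_smul,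
        neg_tmul, map_neg]
      simp only [← smul_tmul']
      module
    · intro b a a'
      simp only [twistMap_tmul, assoc_symm_tmul, LinearMap.rTensor_tmul, add_tmul, map_add,
        assoc_tmul, LinearMap.lTensor_tmul, smul_tmul, tmul_smul, map_smul, twistMap_tmul,
        LinearMap.mul'_apply, smul_add, tmul_add]
      simp only [hm0 a a', hm1 a a', TrivSqZeroExt.fst_one, TrivSqZeroExt.snd_one,
        DualNumber.fst_eps, DualNumber.snd_eps, zero_smul, smul_zero, one_smul, zero_add,
        add_zero, smul_add, add_tmul]
      try simp only [← smul_tmul']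
      module
    · intro a; simp
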